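/- Maintain a tree-structured edge set by the following update: given a current tree E on vertex set S and a new weighted edge e' = (s,s') with weight ω, if e' ∈ E and ω < ω_{e'}, replace the weight; otherwise add e' to E and, if a cycle is created, delete an edge of maximum weight in that cycle. Claim: if at some round the pair (s,s') is inserted with weight w, then at every later round k, every edge e on the unique path in the current tree E^k connecting s and s' satisfies ω_e^k ≤ w (taking the smallest weight w ever inserted for (s,s')). -/

import Mathlib

open SimpleGraph

section Helpers

variable {V : Type*}

lemma reach_of_walk {G K : SimpleGraph V} {u v : V} (p : G.Walk u v)
    (h : ∀ x y, G.Adj x y → s(x, y) ∈ p.edges → K.Reachable x y) : K.Reachable u v := by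
  induction p with
  | nil => exact Reachable.refl _
  | cons h' q ih =>
      exact (h _ _ h' (by simp)).trans (ih fun x y hxy hm => h x y hxy (by simp [hm]))

lemma detour [DecidableEq V] {G : SimpleGraph V} {u x y : V} {c : G.Walk u u}
    (hc : c.IsTrail) (he : s(x, y) ∈ c.edges) :
    ∃ r : G.Walk x y, s(x, y) ∉ r.edges ∧ ∀ g ∈ r.edges, g ∈ c.edges := by
  have hx : x ∈ c.support := c.fst_mem_support_of_mem_edges he
  have hmem : ∀ {g : Sym2 V}, g ∈ (c.rotate x hx).edges ↔ g ∈ c.edges := fun {g} => (c.rotate_edges x hx).mem_iff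
  set c₁ := c.rotate x hx with hc₁
  have he₁ : s(x, y) ∈ c₁.edges := hmem.2 he
  have hy : y ∈ c₁.support := c₁.snd_mem_support_of_mem_edges he₁
  have hsplit : (c₁.takeUntil y hy).append (c₁.dropUntil y hy) = c₁ := c₁.take_spec hy
  have hnodup : c₁.edges.Nodup := (hc.rotate hx).edges_nodup
  rw [← hsplit, Walk.edges_append] at hnodup he₁
  have hdisj := List.disjoint_of_nodup_append hnodup
  by_cases h1 : s(x, y) ∈ (c₁.takeUntil y hy).edges
  · refine ⟨(c₁.dropUntil y hy).reverse, ?_, ?_⟩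
    · rw [Walk.edges_reverse, List.mem_reverse]
      exact fun h2 => hdisj h1 h2
    · intro g hg
      rw [Walk.edges_reverse, List.mem_reverse] at hg
      exact hmem.1 (c₁.edges_dropUntil_subset hy hg)
  · refine ⟨c₁.takeUntil y hy, h1, fun g hg => hmem.1 (c₁.edges_takeUntil_subset hy hg)⟩

lemma edgeSet_sup_single {G : SimpleGraph V} {a b : V} (hab : a ≠ b) :
    (G ⊔ fromEdgeSet {s(a, b)}).edgeSet = insert s(a, b) G.edgeSet := by
  rw [edgeSet_sup, edgeSet_fromEdgeSet]
  ext f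
  simp only [Set.mem_union, Set.mem_diff, Set.mem_singleton_iff, Set.mem_insert_iff,
    Set.mem_setOf_eq]
  constructor
  · rintro (h | ⟨rfl, _⟩) <;> tauto
  · rintro (rfl | h)
    · exact Or.inr ⟨rfl, by simp [hab]⟩
    · exact Or.inl h

lemma step_tree [DecidableEq V] {G : SimpleGraph V} {a b u : V} (hG : G.IsTree)
    (hab : a ≠ b) (hne : s(a, b) ∉ G.edgeSet)
    {c : (G ⊔ fromEdgeSet {s(a, b)}).Walk u u} (hc : c.IsCycle) {emax : Sym2 V}
    (hemax : emax ∈ c.edges) :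
    ((G ⊔ fromEdgeSet {s(a, b)}).deleteEdges {emax}).IsTree := by
  have hHe : (G ⊔ fromEdgeSet {s(a, b)}).edgeSet = insert s(a, b) G.edgeSet :=
    edgeSet_sup_single hab
  constructor
  · -- connected
    have hne' : Nonempty V := hG.isConnected.nonempty
    refine Connected.mk ?_
    intro u' v'
    obtain ⟨p⟩ := hG.isConnected.preconnected u' v'
    refine reach_of_walk p ?_
    intro x y hxy hxyp
    by_cases hxe : s(x, y) = emax
    · obtain ⟨r, hr1, hr2⟩ := detour hc.isTrail (hxe ▸ hemax)
      refine reach_of_walk r ?_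
      intro x' y' hxy' hm'
      refine Adj.reachable ?_
      rw [deleteEdges_adj]
      refine ⟨hxy', ?_⟩
      simp only [Set.mem_singleton_iff]
      rintro rfl
      exact hr1 (hxe ▸ hm')
    · refine Adj.reachable ?_
      rw [deleteEdges_adj]
      exact ⟨(le_sup_left : G ≤ _) hxy, by simpa using hxe⟩
  · -- acyclic
    intro v₀ c₂ hc₂
    by_cases hme : emax = s(a, b)
    · have hsub : ∀ f ∈ c₂.edges, f ∈ G.edgeSet := by
        intro f hf
        have h1 := c₂.edges_subset_edgeSet hf
        rw [edgeSet_deleteEdges, hHe, hme] at h1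
        rcases h1 with ⟨h1 | h1, h2⟩
        · exact absurd h1 h2
        · exact h1
      exact hG.IsAcyclic (c₂.transfer G hsub) (hc₂.transfer hsub)
    · have hemaxG : emax ∈ G.edgeSet := by
        have h1 := c.edges_subset_edgeSet hemax
        rw [hHe] at h1
        rcases h1 with h | h
        · exact absurd h hme
        · exact h
      induction emax using Sym2.ind with | _ xm ym => ?_
      by_cases he'c₂ : s(a, b) ∈ c₂.edges
      · -- c₂ uses the new edge; contradiction with emax being a bridge in G
        obtain ⟨r₂, hr₂1, hr₂2⟩ := detour hc₂.isTrail he'c₂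
        have Rab : (G.deleteEdges {s(xm, ym)}).Reachable a b := by
          refine reach_of_walk r₂ ?_
          intro x y hxy hm
          refine Adj.reachable ?_
          rw [deleteEdges_adj] at hxy ⊢
          obtain ⟨hxyH, hxy2⟩ := hxy
          have h1 : s(x, y) ∈ G.edgeSet := by
            have h2 := hxyH
            rw [← mem_edgeSet, hHe] at h2
            rcases h2 with h2 | h2
            · rw [h2] at hm; exact absurd hm hr₂1
            · exact h2
          exact ⟨(mem_edgeSet G).mp h1, hxy2⟩
        have Rxy : (G.deleteEdges {s(xm, ym)}).Reachable xm ym := by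
          obtain ⟨r, hr1, hr2⟩ := detour hc.isTrail hemax
          refine reach_of_walk r ?_
          intro x y hxy hm
          by_cases hxe : s(x, y) = s(a, b)
          · rw [Sym2.eq_iff] at hxe
            rcases hxe with ⟨rfl, rfl⟩ | ⟨rfl, rfl⟩
            · exact Rab
            · exact Rab.symm
          · refine Adj.reachable ?_
            rw [deleteEdges_adj]
            have h1 : s(x, y) ∈ G.edgeSet := by
              have h2 := hxy
              rw [← mem_edgeSet, hHe] at h2
              rcases h2 with h2 | h2
              · exact absurd h2 hxe
              · exact h2
            refine ⟨(mem_edgeSet G).mp h1, ?_⟩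
            simp only [Set.mem_singleton_iff]
            intro heq
            rw [← heq] at hr1
            exact hr1 hm
        have hbridge := isAcyclic_iff_forall_edge_isBridge.mp hG.IsAcyclic hemaxG
        rw [isBridge_iff] at hbridge
        exact hbridge Rxy
      · have hsub : ∀ f ∈ c₂.edges, f ∈ G.edgeSet := by
          intro f hf
          have h1 := c₂.edges_subset_edgeSet hf
          rw [edgeSet_deleteEdges, hHe] at h1
          rcases h1 with ⟨rfl | h1, _⟩
          · exact absurd hf he'c₂
          · exact h1
        exact hG.IsAcyclic (c₂.transfer G hsub) (hc₂.transfer hsub)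

private def light (T : SimpleGraph V) (Wt : Sym2 V → ℝ) (bd : ℝ) : SimpleGraph V :=
  fromEdgeSet {f | f ∈ T.edgeSet ∧ Wt f ≤ bd}

private lemma light_adj {T : SimpleGraph V} {Wt : Sym2 V → ℝ} {bd : ℝ} {x y : V} :
    (light T Wt bd).Adj x y ↔ (s(x, y) ∈ T.edgeSet ∧ Wt s(x, y) ≤ bd) ∧ x ≠ y := by
  rw [light, fromEdgeSet_adj]; rfl

private lemma light_edge {T : SimpleGraph V} {Wt : Sym2 V → ℝ} {bd : ℝ} {f : Sym2 V}
    (h : f ∈ (light T Wt bd).edgeSet) : f ∈ T.edgeSet ∧ Wt f ≤ bd := by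
  rw [light, edgeSet_fromEdgeSet] at h
  exact h.1


end Helpers

/-- Invariant of the tree-update procedure `UpdateG`: a tree with weighted edges is
maintained; at round `n` the pair `(a n, b n)` with weight `w n` is inserted — if the edge
is already present its weight is lowered when possible, otherwise the edge is added and a
maximum-weight edge of the created cycle is deleted. Then for every insertion round `m`
and every later round `k`, every edge on the (unique) path in the tree `T k` connecting
`a m` and `b m` has weight at most `w m`. -/
theorem stmt11 {V : Type*} [Fintype V] [DecidableEq V]
    (T : ℕ → SimpleGraph V) (W : ℕ → Sym2 V → ℝ)
    (a b : ℕ → V) (w : ℕ → ℝ)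
    (hab : ∀ n, a n ≠ b n)
    (htree : (T 0).IsTree)
    (hrep : ∀ n, s(a n, b n) ∈ (T n).edgeSet → w n < W n (s(a n, b n)) →
      T (n + 1) = T n ∧
        W (n + 1) = fun e => if e = s(a n, b n) then w n else W n e)
    (hkeep : ∀ n, s(a n, b n) ∈ (T n).edgeSet → ¬ w n < W n (s(a n, b n)) →
      T (n + 1) = T n ∧ W (n + 1) = W n)
    (hins : ∀ n, s(a n, b n) ∉ (T n).edgeSet →
      (W (n + 1) = fun e => if e = s(a n, b n) then w n else W n e) ∧
      ∃ (x : V) (c : (T n ⊔ fromEdgeSet {s(a n, b n)}).Walk x x), c.IsCycle ∧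
        ∃ emax ∈ c.edges,
          (∀ e' ∈ c.edges, W (n + 1) e' ≤ W (n + 1) emax) ∧
          T (n + 1) = (T n ⊔ fromEdgeSet {s(a n, b n)}).deleteEdges {emax}) :
    ∀ m k, m < k → ∀ (p : (T k).Walk (a m) (b m)), p.IsPath →
      ∀ e ∈ p.edges, W k e ≤ w m := by
  have key : ∀ k, (T k).IsTree ∧
      ∀ m < k, (light (T k) (W k) (w m)).Reachable (a m) (b m) := by
    intro k
    induction k with
    | zero => exact ⟨htree, fun m hm => absurd hm (Nat.not_lt_zero m)⟩
    | succ k ih =>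
      obtain ⟨ihT, ihR⟩ := ih
      by_cases hmem : s(a k, b k) ∈ (T k).edgeSet
      · -- edge already present : T unchanged, weights pointwise ≤
        have hTW : T (k + 1) = T k ∧ ∀ f ∈ (T k).edgeSet, W (k + 1) f ≤ W k f := by
          by_cases hlt : w k < W k (s(a k, b k))
          · obtain ⟨hT, hW⟩ := hrep k hmem hlt
            refine ⟨hT, fun f _ => ?_⟩
            rw [hW]
            by_cases hf : f = s(a k, b k)
            · simp only [hf, if_pos rfl]
              exact le_of_lt hlt
            · simp [hf]
          · obtain ⟨hT, hW⟩ := hkeep k hmem hlt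
            exact ⟨hT, fun f _ => le_of_eq (by rw [hW])⟩
        obtain ⟨hT, hWle⟩ := hTW
        have hWk : W (k + 1) (s(a k, b k)) ≤ w k := by
          by_cases hlt : w k < W k (s(a k, b k))
          · rw [(hrep k hmem hlt).2]; simp
          · rw [(hkeep k hmem hlt).2]; exact not_lt.mp hlt
        refine ⟨hT ▸ ihT, ?_⟩
        intro m hm
        rcases Nat.lt_succ_iff_lt_or_eq.mp hm with hm | rfl
        · refine reach_of_walk (ihR m hm).some ?_
          intro x y hxy _
          obtain ⟨⟨hmemk, hwle⟩, hne⟩ := light_adj.mp hxy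
          exact Adj.reachable (light_adj.mpr
            ⟨⟨hT ▸ hmemk, le_trans (hWle _ hmemk) hwle⟩, hne⟩)
        · exact Adj.reachable (light_adj.mpr ⟨⟨hT ▸ hmem, hWk⟩, hab m⟩)
      · -- insertion case
        obtain ⟨hW, x, c, hc, emax, hemax, hmax, hT⟩ := hins k hmem
        have hHe : (T k ⊔ fromEdgeSet {s(a k, b k)}).edgeSet
            = insert s(a k, b k) (T k).edgeSet := edgeSet_sup_single (hab k)
        have htreeK1 : (T (k + 1)).IsTree := by
          rw [hT]; exact step_tree ihT (hab k) hmem hc hemax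
        have hWe' : W (k + 1) (s(a k, b k)) = w k := by rw [hW]; simp
        have hWne : ∀ f, f ≠ s(a k, b k) → W (k + 1) f = W k f := by
          intro f hf; rw [hW]; simp [hf]
        have hmemK1 : ∀ f, f ∈ (T k ⊔ fromEdgeSet {s(a k, b k)}).edgeSet → f ≠ emax →
            f ∈ (T (k + 1)).edgeSet := by
          intro f h1 h2
          rw [hT, edgeSet_deleteEdges]
          exact ⟨h1, by simpa using h2⟩
        have he'c : s(a k, b k) ∈ c.edges := by
          by_contra h
          have hsub : ∀ f ∈ c.edges, f ∈ (T k).edgeSet := by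
            intro f hf
            have h1 := c.edges_subset_edgeSet hf
            rw [hHe] at h1
            rcases h1 with rfl | h1
            · exact absurd hf h
            · exact h1
          exact ihT.IsAcyclic (c.transfer _ hsub) (hc.transfer hsub)
        refine ⟨htreeK1, ?_⟩
        intro m hm
        rcases Nat.lt_succ_iff_lt_or_eq.mp hm with hm | rfl
        · -- old pairs
          refine reach_of_walk (ihR m hm).some ?_
          intro x y hxy _
          obtain ⟨⟨hmemk, hwle⟩, hne⟩ := light_adj.mp hxy
          have hxyne' : s(x, y) ≠ s(a k, b k) := fun h => hmem (h ▸ hmemk)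
          by_cases hxye : s(x, y) = emax
          · -- detour around the deleted edge
            have hwem : W (k + 1) emax ≤ w m := by
              rw [← hxye, hWne _ hxyne']; exact hwle
            obtain ⟨r, hr1, hr2⟩ := detour hc.isTrail (by rw [hxye]; exact hemax)
            refine reach_of_walk r ?_
            intro x' y' hxy' hm'
            refine Adj.reachable (light_adj.mpr ⟨⟨?_, ?_⟩, hxy'.ne⟩)
            · refine hmemK1 _ ((mem_edgeSet _).mpr hxy') ?_
              intro heq
              rw [← hxye] at heq
              rw [heq] at hm'
              exact hr1 hm'
            · exact le_trans (hmax _ (hr2 _ hm')) hwem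
          · refine Adj.reachable (light_adj.mpr ⟨⟨?_, ?_⟩, hne⟩)
            · exact hmemK1 _ (by rw [hHe]; exact Or.inr hmemk) hxye
            · rw [hWne _ hxyne']; exact hwle
        · -- the new pair
          by_cases hme : emax = s(a m, b m)
          · obtain ⟨r, hr1, hr2⟩ := detour hc.isTrail he'c
            refine reach_of_walk r ?_
            intro x' y' hxy' hm'
            refine Adj.reachable (light_adj.mpr ⟨⟨?_, ?_⟩, hxy'.ne⟩)
            · refine hmemK1 _ ((mem_edgeSet _).mpr hxy') ?_
              intro heq
              rw [heq, hme] at hm'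
              exact hr1 hm'
            · calc W (m + 1) (s(x', y')) ≤ W (m + 1) emax := hmax _ (hr2 _ hm')
                _ = w m := by rw [hme, hWe']
          · refine Adj.reachable (light_adj.mpr ⟨⟨?_, le_of_eq hWe'⟩, hab m⟩)
            exact hmemK1 _ (by rw [hHe]; exact Or.inl rfl) (fun h => hme h.symm)
  intro m k hmk p hp e hep
  obtain ⟨htk, hR⟩ := key k
  obtain ⟨q₀⟩ := hR m hmk
  have hsub : ∀ f ∈ q₀.edges, f ∈ (T k).edgeSet := fun f hf =>
    (light_edge (q₀.edges_subset_edgeSet hf)).1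
  have hpe : p = ((q₀.transfer (T k) hsub).toPath : (T k).Walk (a m) (b m)) := by
    have := htk.IsAcyclic.path_unique ⟨p, hp⟩ (q₀.transfer (T k) hsub).toPath
    exact congrArg Subtype.val this
  rw [hpe] at hep
  have he2 : e ∈ q₀.edges := by
    have h1 := Walk.edges_toPath_subset _ hep
    rwa [Walk.edges_transfer] at h1
  exact (light_edge (q₀.edges_subset_edgeSet he2)).2
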